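/- arXiv:1805.00196 — 3 statements merged into one kernel-verified Lean document; each statement's English description precedes it below -/
import Mathlib

section
/- Every finite solvable group all of whose elements have prime power order belongs to the class 𝒞. -/
/- Common framework for formalizing "A generalization of strongly monomial groups"
   (Bakshi–Kaur).  The rational group algebra ℚG is modelled inside the complex
   group algebra `MonoidAlgebra ℂ G` (rationality of coefficients is imposed
   explicitly where the statements require it). -/

noncomputable section

open MonoidAlgebra

attribute [local instance] Classical.propDecidable

namespace GenStrongMonomial

/-- The field `ℚ(ψ)` generated over `ℚ` by the values of `ψ`. -/
def ratField {α : Type} (ψ : α → ℂ) : IntermediateField ℚ ℂ :=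
  IntermediateField.adjoin ℚ (Set.range ψ)

theorem mem_ratField {α : Type} (ψ : α → ℂ) (a : α) : ψ a ∈ ratField ψ :=
  IntermediateField.subset_adjoin ℚ _ ⟨a, rfl⟩

/-- `Σ_{σ ∈ Gal(ℚ(ψ)/ℚ)} σ(ψ a)`. -/
def galSum {α : Type} (ψ : α → ℂ) (a : α) : ℂ :=
  ∑ᶠ σ : ratField ψ ≃ₐ[ℚ] ratField ψ, ((σ ⟨ψ a, mem_ratField ψ a⟩ : ratField ψ) : ℂ)

variable {G : Type} [Group G] [Fintype G]

/-- The primitive central idempotent `e_ℚ(χ)` attached to a character `χ` of `G`. -/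
def eQG (χ : G → ℂ) : MonoidAlgebra ℂ G :=
  ∑ g : G, single g⁻¹ (χ 1 / (Fintype.card G : ℂ) * galSum χ g)

/-- `e_ℚ(ψ)` for a character `ψ` of a subgroup `S` of `G`, viewed inside `ℚG`. -/
def eQ (S : Subgroup G) (ψ : ↥S → ℂ) : MonoidAlgebra ℂ G :=
  ∑ g : G,
    single g⁻¹ (if h : g ∈ S then ψ 1 / (Nat.card ↥S : ℂ) * galSum ψ ⟨g, h⟩ else 0)

/-- `χ` is an irreducible (complex) character of the group `H`. -/
def IsIrrChar (H : Type) [Group H] (χ : H → ℂ) : Prop :=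
  ∃ V : FDRep ℂ H, CategoryTheory.Simple V ∧ χ = V.character

/-- The induced character `ψ^G` of a character `ψ` of a subgroup `S ≤ G`. -/
def ind (S : Subgroup G) (ψ : ↥S → ℂ) : G → ℂ := fun g =>
  (Nat.card ↥S : ℂ)⁻¹ *
    ∑ x : G, if h : x * g * x⁻¹ ∈ S then ψ ⟨x * g * x⁻¹, h⟩ else 0

/-- The induced character `ψ^T` of a character `ψ` of `S`, induced to a subgroup `T`. -/
def indSub (S T : Subgroup G) (ψ : ↥S → ℂ) : ↥T → ℂ := fun t =>
  (Nat.card ↥S : ℂ)⁻¹ *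
    ∑ x : ↥T, if h : (x : G) * (t : G) * (x : G)⁻¹ ∈ S then ψ ⟨_, h⟩ else 0

/-- Conjugate `α^g = g⁻¹ α g` of an element of the group algebra. -/
def conjQA (α : MonoidAlgebra ℂ G) (g : G) : MonoidAlgebra ℂ G :=
  single g⁻¹ (1 : ℂ) * α * single g (1 : ℂ)

/-- The centralizer `Cen_T(α)` of an element of the group algebra in a subset `T ⊆ G`. -/
def cenIn (T : Set G) (α : MonoidAlgebra ℂ G) : Set G :=
  {g | g ∈ T ∧ single g (1 : ℂ) * α = α * single g (1 : ℂ)}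

/-- The distinct `T`-conjugates of `α` are mutually orthogonal. -/
def MutOrthConj (T : Set G) (α : MonoidAlgebra ℂ G) : Prop :=
  ∀ g ∈ T, ∀ h ∈ T, conjQA α g ≠ conjQA α h → conjQA α g * conjQA α h = 0

/-- `ψ ∈ Irr(S)` is a strong inductive source of `G`. -/
def IsSISG (S : Subgroup G) (ψ : ↥S → ℂ) : Prop :=
  IsIrrChar G (ind S ψ) ∧
  (↑S : Set G) ⊆ cenIn Set.univ (eQ S ψ) ∧
  (∀ c ∈ cenIn Set.univ (eQ S ψ), ∀ s ∈ S, c * s * c⁻¹ ∈ S) ∧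
  MutOrthConj Set.univ (eQ S ψ)

/-- `ψ ∈ Irr(S)` is a strong inductive source of the subgroup `T` of `G`. -/
def IsSIS (S T : Subgroup G) (ψ : ↥S → ℂ) : Prop :=
  S ≤ T ∧
  IsIrrChar ↥T (indSub S T ψ) ∧
  (↑S : Set G) ⊆ cenIn ↑T (eQ S ψ) ∧
  (∀ c ∈ cenIn ↑T (eQ S ψ), ∀ s ∈ S, c * s * c⁻¹ ∈ S) ∧
  MutOrthConj ↑T (eQ S ψ)

/-- `K` is a normal subgroup of `H` (inside the ambient group `G`). -/
def IsNormalIn (K H : Subgroup G) : Prop :=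
  K ≤ H ∧ ∀ h ∈ H, ∀ k ∈ K, h * k * h⁻¹ ∈ K

/-- The quotient `H/K` is cyclic. -/
def IsCyclicQuot (H K : Subgroup G) : Prop :=
  ∃ h ∈ H, ∀ x ∈ H, ∃ n : ℤ, (h ^ n)⁻¹ * x ∈ K

/-- `(H, K)` is a Shoda pair of `G`. -/
def IsShodaPair (H K : Subgroup G) : Prop :=
  IsNormalIn K H ∧ IsCyclicQuot H K ∧
  ∀ g : G,
    (∀ h ∈ H, h⁻¹ * g⁻¹ * h * g ∈ H → h⁻¹ * g⁻¹ * h * g ∈ K) → g ∈ H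

/-- `lam ∈ Lin(H, K)`: a linear character of `H` with kernel `K`. -/
def IsLinCharWK (H K : Subgroup G) (lam : ↥H → ℂ) : Prop :=
  (∀ a b : ↥H, lam (a * b) = lam a * lam b) ∧ lam 1 = 1 ∧
  ∀ h : ↥H, lam h = lam 1 ↔ (h : G) ∈ K

/-- A strong inductive chain from `H` to `G` for the character `lam` of `H`. -/
def IsStrongInductiveChain (H : Subgroup G) (lam : ↥H → ℂ) {n : ℕ}
    (Hc : Fin (n + 1) → Subgroup G) : Prop :=
  Hc 0 = H ∧ Hc (Fin.last n) = ⊤ ∧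
  ∀ i : Fin n, IsSIS (Hc i.castSucc) (Hc i.succ) (indSub H (Hc i.castSucc) lam)

/-- `(H, K)` is a generalized strong Shoda pair of `G`. -/
def IsGSSP (H K : Subgroup G) : Prop :=
  IsShodaPair H K ∧
  ∀ lam : ↥H → ℂ, IsLinCharWK H K lam →
    ∃ (n : ℕ) (Hc : Fin (n + 1) → Subgroup G), IsStrongInductiveChain H lam Hc

/-- `G` is generalized strongly monomial. -/
def IsGenStronglyMonomial (G : Type) [Group G] [Fintype G] : Prop :=
  ∀ χ : G → ℂ, IsIrrChar G χ →
    ∃ (H K : Subgroup G) (lam : ↥H → ℂ),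
      IsGSSP H K ∧ IsLinCharWK H K lam ∧ χ = ind H lam

/-- `Â = (1/|A|) Σ_{a ∈ A} a` in the group algebra. -/
def hatQ (A : Subgroup G) : MonoidAlgebra ℂ G :=
  (Nat.card ↥A : ℂ)⁻¹ • ∑ a : ↥A, single (a : G) (1 : ℂ)

/-- `L` is a minimal normal subgroup of `H` containing `K` properly. -/
def IsMinNormalAbove (H K L : Subgroup G) : Prop :=
  K < L ∧ IsNormalIn L H ∧
  ∀ L' : Subgroup G, K < L' → L' ≤ L → IsNormalIn L' H → L' = L

/-- `ε(H, K) = K̂` if `H = K`, and `Π_L (K̂ - L̂)` otherwise (`L` running over the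
minimal normal subgroups of `H` containing `K` properly); the factors commute, so
taking the product in an arbitrarily fixed order is harmless. -/
def epsQ (H K : Subgroup G) : MonoidAlgebra ℂ G :=
  letI : Finite (Subgroup G) :=
    Finite.of_injective (fun A : Subgroup G => (A : Set G)) SetLike.coe_injective
  letI : Fintype (Subgroup G) := Fintype.ofFinite _
  if H = K then hatQ K
  else (((Finset.univ.filter fun L => IsMinNormalAbove H K L).toList).map
    fun L => hatQ K - hatQ L).prod

/-- `e(A, H, K)`: the sum of the distinct `A`-conjugates of `ε(H, K)`. -/
def eGHK (A H K : Subgroup G) : MonoidAlgebra ℂ G :=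
  ∑ β ∈ Finset.image (fun a : ↥A => conjQA (epsQ H K) (a : G)) Finset.univ, β

/-- `(H, K)` is a strong Shoda pair of `G`. -/
def IsSSP (H K : Subgroup G) : Prop :=
  IsShodaPair H K ∧
  (↑H : Set G) ⊆ cenIn Set.univ (epsQ H K) ∧
  (∀ c ∈ cenIn Set.univ (epsQ H K), ∀ h ∈ H, c * h * c⁻¹ ∈ H) ∧
  MutOrthConj Set.univ (epsQ H K)

/-- `G` is strongly monomial. -/
def IsStronglyMonomial (G : Type) [Group G] [Fintype G] : Prop :=
  ∀ χ : G → ℂ, IsIrrChar G χ →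
    ∃ (H K : Subgroup G) (lam : ↥H → ℂ),
      IsSSP H K ∧ IsLinCharWK H K lam ∧ χ = ind H lam

/-- The class `𝒞`: every quotient of every subgroup of `G` (i.e. every section `H/N`
with `N ⊴ H ≤ G`) is either abelian, or contains a non-central abelian normal
subgroup (`A/N` with `N ≤ A ≤ H`). -/
def InClassC (G : Type) [Group G] : Prop :=
  ∀ H N : Subgroup G, IsNormalIn N H →
    ((∀ a ∈ H, ∀ b ∈ H, a⁻¹ * b⁻¹ * a * b ∈ N) ∨
      ∃ A : Subgroup G, N ≤ A ∧ A ≤ H ∧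
        (∀ h ∈ H, ∀ a ∈ A, h * a * h⁻¹ ∈ A) ∧
        (∀ a ∈ A, ∀ b ∈ A, a⁻¹ * b⁻¹ * a * b ∈ N) ∧
        ∃ a ∈ A, ∃ h ∈ H, a⁻¹ * h⁻¹ * a * h ∉ N)

/-- The standard inner product of two class functions on a finite group. -/
def innerChar (H : Type) [Fintype H] (χ φ : H → ℂ) : ℂ :=
  (Fintype.card H : ℂ)⁻¹ * ∑ h : H, χ h * (starRingEnd ℂ) (φ h)

/-- The conjugate character `φ^g` of a character `φ` of a normal subgroup `N`,
given by `φ^g(n) = φ(g n g⁻¹)`. -/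
def conjCharN (N : Subgroup G) (hN : N.Normal) (φ : ↥N → ℂ) (g : G) : ↥N → ℂ :=
  fun n => φ ⟨g * (n : G) * g⁻¹, hN.conj_mem (n : G) n.2 g⟩

/-- The inertia group `I_G(φ)` of a character `φ` of a normal subgroup `N ⊴ G`. -/
def inertia (N : Subgroup G) (hN : N.Normal) (φ : ↥N → ℂ) : Subgroup G where
  carrier := {g | conjCharN N hN φ g = φ}
  one_mem' := by
    show conjCharN N hN φ 1 = φ
    funext n
    show φ ⟨1 * (n : G) * 1⁻¹, _⟩ = φ n
    exact congrArg φ (Subtype.ext (by group))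
  mul_mem' := by
    intro a b ha hb
    show conjCharN N hN φ (a * b) = φ
    have ha' : conjCharN N hN φ a = φ := ha
    have hb' : conjCharN N hN φ b = φ := hb
    funext n
    have key : a * b * (n : G) * (a * b)⁻¹ = a * (b * (n : G) * b⁻¹) * a⁻¹ := by group
    have hmem : a * (b * (n : G) * b⁻¹) * a⁻¹ ∈ N := by
      rw [← key]; exact hN.conj_mem _ n.2 _
    calc conjCharN N hN φ (a * b) n
        = φ ⟨a * (b * (n : G) * b⁻¹) * a⁻¹, hmem⟩ := congrArg φ (Subtype.ext key)
      _ = conjCharN N hN φ a ⟨b * (n : G) * b⁻¹, hN.conj_mem _ n.2 _⟩ := rfl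
      _ = φ ⟨b * (n : G) * b⁻¹, hN.conj_mem _ n.2 _⟩ := by rw [ha']
      _ = conjCharN N hN φ b n := rfl
      _ = φ n := by rw [hb']
  inv_mem' := by
    intro a ha
    have ha' : conjCharN N hN φ a = φ := ha
    show conjCharN N hN φ a⁻¹ = φ
    funext n
    have h2 : a⁻¹ * (n : G) * a ∈ N := by
      have := hN.conj_mem (n : G) n.2 a⁻¹
      simpa using this
    have h3 := congrFun ha' ⟨a⁻¹ * (n : G) * a, h2⟩
    have h4 : a * (a⁻¹ * (n : G) * a) * a⁻¹ = (n : G) := by group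
    have h5 : φ (⟨a⁻¹ * (n : G) * a, h2⟩ : ↥N) = φ n := by
      rw [← h3]
      exact congrArg φ (Subtype.ext h4)
    calc conjCharN N hN φ a⁻¹ n
        = φ ⟨a⁻¹ * (n : G) * a, h2⟩ := congrArg φ (Subtype.ext (by group))
      _ = φ n := h5

/-- `H` is a subnormal subgroup of `G`. -/
def IsSubnormal (H : Subgroup G) : Prop :=
  ∃ (n : ℕ) (c : Fin (n + 1) → Subgroup G), c 0 = H ∧ c (Fin.last n) = ⊤ ∧
    ∀ i : Fin n, IsNormalIn (c i.castSucc) (c i.succ)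

/-- A linear character of a subgroup `H`. -/
def IsLinChar (H : Subgroup G) (lam : ↥H → ℂ) : Prop :=
  (∀ a b : ↥H, lam (a * b) = lam a * lam b) ∧ lam 1 = 1

/-- `G` is subnormally monomial. -/
def IsSubnormallyMonomial (G : Type) [Group G] [Fintype G] : Prop :=
  ∀ χ : G → ℂ, IsIrrChar G χ →
    ∃ (H : Subgroup G) (lam : ↥H → ℂ),
      IsSubnormal H ∧ IsLinChar H lam ∧ χ = ind H lam

end GenStrongMonomial
namespace GenStrongMonomial

variable {G : Type} [Group G] [Fintype G]

/-- `ℤT`: elements of the group algebra with integer coefficients supported in `T`. -/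
def ZSet (T : Set G) : Set (MonoidAlgebra ℂ G) :=
  {β | (∀ g : G, β.coeff g ≠ 0 → g ∈ T) ∧ ∀ g : G, ∃ n : ℤ, β.coeff g = (n : ℂ)}

/-- `ℚT`: elements of the group algebra with rational coefficients supported in `T`. -/
def QSet (T : Set G) : Set (MonoidAlgebra ℂ G) :=
  {β | (∀ g : G, β.coeff g ≠ 0 → g ∈ T) ∧ ∀ g : G, ∃ q : ℚ, β.coeff g = (q : ℂ)}

/-- The corner `ℚT·e = {γe : γ ∈ ℚT}`. -/
def cornerSet (T : Set G) (e : MonoidAlgebra ℂ G) : Set (MonoidAlgebra ℂ G) :=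
  (fun γ => γ * e) '' QSet T

/-- The center of a (sub)ring given as a subset of the group algebra. -/
def centerOf (A : Set (MonoidAlgebra ℂ G)) : Set (MonoidAlgebra ℂ G) :=
  {x ∈ A | ∀ y ∈ A, x * y = y * x}

/-- The order `ℤ(1 - e) + ℤT·e`. -/
def orderSet (T : Set G) (e : MonoidAlgebra ℂ G) : Set (MonoidAlgebra ℂ G) :=
  {x | ∃ (a : ℤ) (β : MonoidAlgebra ℂ G), β ∈ ZSet T ∧ x = (a : ℂ) • (1 - e) + β * e}

/-- The unit group `U(A)` of a subring `A`, as a subset. -/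
def unitsOf (A : Set (MonoidAlgebra ℂ G)) : Set (MonoidAlgebra ℂ G) :=
  {x ∈ A | ∃ y ∈ A, x * y = 1 ∧ y * x = 1}

/-- The group of central units `Z(U(A))`. -/
def centerOfUnits (A : Set (MonoidAlgebra ℂ G)) : Set (MonoidAlgebra ℂ G) :=
  {x ∈ unitsOf A | ∀ y ∈ unitsOf A, x * y = y * x}

/-- `B` is a subgroup of (the group whose underlying set is) `X`. -/
def IsSubgroupSet (B X : Set (MonoidAlgebra ℂ G)) : Prop :=
  B ⊆ X ∧ (1 : MonoidAlgebra ℂ G) ∈ B ∧ (∀ a ∈ B, ∀ b ∈ B, a * b ∈ B) ∧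
    ∀ a ∈ B, ∃ b ∈ B, a * b = 1 ∧ b * a = 1

/-- `B` has finite index in `X`: finitely many cosets `f·B` cover `X`. -/
def FiniteIndexIn (B X : Set (MonoidAlgebra ℂ G)) : Prop :=
  ∃ F : Finset (MonoidAlgebra ℂ G), ∀ x ∈ X, ∃ f ∈ F, ∃ b ∈ B, x = f * b

/-- The subgroup generated by a set `X` of invertible elements, as a subset:
the smallest subset containing `X`, containing `1`, closed under products and
under (two-sided) inverses. -/
def genSubgroup (X : Set (MonoidAlgebra ℂ G)) : Set (MonoidAlgebra ℂ G) :=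
  ⋂₀ {A | X ⊆ A ∧ 1 ∈ A ∧ (∀ a ∈ A, ∀ b ∈ A, a * b ∈ A) ∧
      ∀ a ∈ A, ∀ b : MonoidAlgebra ℂ G, a * b = 1 → b * a = 1 → b ∈ A}

/-- Product of the values of `f` over a finite set of group elements (the products
occurring below have pairwise commuting factors, so any fixed order is harmless). -/
def setProd (F : Finset G) (f : G → MonoidAlgebra ℂ G) : MonoidAlgebra ℂ G :=
  (F.toList.map f).prod

/-- The Bass unit `u_{k,m}(g)`, viewed inside the complex group algebra. -/
def bassC (g : G) (k m : ℕ) : MonoidAlgebra ℂ G :=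
  (∑ i ∈ Finset.range k, single (g ^ i) (1 : ℂ)) ^ m +
    (((1 - (k : ℤ) ^ m) / (orderOf g : ℤ) : ℤ) : ℂ) •
      ∑ i ∈ Finset.range (orderOf g), single (g ^ i) (1 : ℂ)

/-- The element `b = 1 - M̂ + u_{k,m}(g)·M̂`. -/
def bEltC (g : G) (k m : ℕ) (M : Subgroup G) : MonoidAlgebra ℂ G :=
  1 - hatQ M + bassC g k m * hatQ M

/-- The set of generalized Bass units of `ℤH` based on elements `h ∈ H` and the
commutator subgroup `H' = ⁅H,H⁆`: the minimal powers `b^{n_b} ∈ U(ℤH)` of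
`b = u_{k,m}(1 - Ĥ' + hĤ')`. -/
def genBassSetRel (H : Subgroup G) : Set (MonoidAlgebra ℂ G) :=
  {x | ∃ (h : G) (k m : ℕ), h ∈ H ∧ 0 < k ∧ 0 < m ∧ k ^ m ≡ 1 [MOD orderOf h] ∧
    ∃ n : ℕ, 0 < n ∧ x = bEltC h k m ⁅H, H⁆ ^ n ∧ x ∈ unitsOf (ZSet ↑H) ∧
      ∀ n' : ℕ, 0 < n' → n' < n → bEltC h k m ⁅H, H⁆ ^ n' ∉ unitsOf (ZSet ↑H)}

/-- The set of all generalized Bass units of `ℤG` (based on `g ∈ G` and a normal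
subgroup `M ⊴ G`). -/
def genBassSetG (G : Type) [Group G] [Fintype G] : Set (MonoidAlgebra ℂ G) :=
  {x | ∃ (g : G) (k m : ℕ) (M : Subgroup G), M.Normal ∧ 0 < k ∧ 0 < m ∧
      k ^ m ≡ 1 [MOD orderOf g] ∧
    ∃ n : ℕ, 0 < n ∧ x = bEltC g k m M ^ n ∧ x ∈ unitsOf (ZSet Set.univ) ∧
      ∀ n' : ℕ, 0 < n' → n' < n → bEltC g k m M ^ n' ∉ unitsOf (ZSet Set.univ)}

/-- The set of Bass units of `ℤG`. -/
def bassSetG (G : Type) [Group G] [Fintype G] : Set (MonoidAlgebra ℂ G) :=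
  {x | ∃ (g : G) (k m : ℕ), 0 < k ∧ 0 < m ∧ k ^ m ≡ 1 [MOD orderOf g] ∧ x = bassC g k m}

/-- The least center property of the strong inductive source `ψ ∈ Irr(S)` w.r.t. the
subgroup `T`:  `Z(ℚC·e_ℚ(ψ)) = Z(ℚS·e_ℚ(ψ))^{C/S}` where `C = Cen_T(e_ℚ(ψ))`. -/
def LeastCenterStep (S T : Subgroup G) (ψ : ↥S → ℂ) : Prop :=
  centerOf (cornerSet (cenIn ↑T (eQ S ψ)) (eQ S ψ)) =
    {x ∈ centerOf (cornerSet ↑S (eQ S ψ)) | ∀ c ∈ cenIn ↑T (eQ S ψ), conjQA x c = x}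

/-- The least center property of `ψ ∈ Irr(S)` w.r.t. the whole group `G`. -/
def LeastCenterPropG (S : Subgroup G) (ψ : ↥S → ℂ) : Prop :=
  centerOf (cornerSet (cenIn Set.univ (eQ S ψ)) (eQ S ψ)) =
    {x ∈ centerOf (cornerSet ↑S (eQ S ψ)) |
      ∀ c ∈ cenIn Set.univ (eQ S ψ), conjQA x c = x}

/-- The iterated construction `z_i^{𝒩}(u)` of central units along a chain `Hc`
(with `Hc 0 = H`), using the transversals `Ts j` of `C_j = Cen_{H_{j+1}}(e_ℚ(λ^{H_j}))`
in `H_{j+1}`:  `z_{j+1} = Π_{t ∈ T_j} (Π_{c ∈ C_j} z_j^c)^t`. -/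
def zIter (H : Subgroup G) (lam : ↥H → ℂ) (Hc : ℕ → Subgroup G) (Ts : ℕ → Finset G)
    (u : MonoidAlgebra ℂ G) : ℕ → MonoidAlgebra ℂ G
  | 0 => u
  | j + 1 =>
    setProd (Ts j) fun t =>
      conjQA
        (setProd
          (Set.toFinite (cenIn ↑(Hc (j + 1)) (eQ (Hc j) (indSub H (Hc j) lam)))).toFinset
          fun c => conjQA (zIter H lam Hc Ts u j) c) t

/-- The iterated construction `c_i^{𝒩}(u)` along a subnormal series, using the
transversals `Ts j` of `H_j` in `H_{j+1}`:  `c_{j+1} = Π_{t ∈ T_j} c_j^t`. -/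
def cIter (Ts : ℕ → Finset G) (u : MonoidAlgebra ℂ G) : ℕ → MonoidAlgebra ℂ G
  | 0 => u
  | j + 1 => setProd (Ts j) fun t => conjQA (cIter Ts u j) t

end GenStrongMonomial

lemma dvd_isPrimePow' {n d : ℕ} (hn : IsPrimePow n) (hd : d ∣ n) (h1 : d ≠ 1) :
    IsPrimePow d := by
  obtain ⟨p, k, hp, hk, rfl⟩ := hn
  obtain ⟨m, hm, rfl⟩ := (Nat.dvd_prime_pow hp.nat_prime).mp hd
  refine ⟨p, m, hp, Nat.pos_of_ne_zero ?_, rfl⟩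
  rintro rfl; simp at h1

open scoped commutatorElement in
lemma keyC (Q : Type*) [Group Q] [Finite Q] (hsolv : IsSolvable Q)
    (hpp : ∀ q : Q, q = 1 ∨ IsPrimePow (orderOf q)) :
    (∀ a b : Q, a * b = b * a) ∨
      ∃ B : Subgroup Q, B.Normal ∧ (∀ x ∈ B, ∀ y ∈ B, x * y = y * x) ∧
        ∃ b ∈ B, ∃ q : Q, b * q ≠ q * b := by
  classical
  by_cases hab : ∀ a b : Q, a * b = b * a
  · exact Or.inl hab
  right
  push_neg at hab
  obtain ⟨a₀, b₀, hab⟩ := hab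
  have hnt : Nontrivial Q := by
    refine ⟨a₀, 1, ?_⟩; rintro rfl; simp at hab
  by_cases hz : Subgroup.center Q = ⊥
  · -- center trivial: use last nontrivial derived term
    have hex : ∃ n, derivedSeries Q n = ⊥ := hsolv.solvable
    have hm0 : Nat.find hex ≠ 0 := by
      intro h0
      have hs := Nat.find_spec hex
      rw [h0, derivedSeries_zero] at hs
      have h1 : a₀ = 1 := Subgroup.mem_bot.mp (hs ▸ Subgroup.mem_top a₀)
      have h2 : b₀ = 1 := Subgroup.mem_bot.mp (hs ▸ Subgroup.mem_top b₀)
      rw [h1, h2] at hab; simp at hab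
    obtain ⟨m', hmm⟩ := Nat.exists_eq_succ_of_ne_zero hm0
    have hbot : derivedSeries Q (m' + 1) = ⊥ := by
      have := Nat.find_spec hex
      rw [hmm] at this
      exact this
    have hB : derivedSeries Q m' ≠ ⊥ := Nat.find_min hex (by omega)
    have hBab : ∀ x ∈ derivedSeries Q m', ∀ y ∈ derivedSeries Q m', x * y = y * x := by
      intro x hx y hy
      have h : ⁅x, y⁆ ∈ derivedSeries Q (m' + 1) := Subgroup.commutator_mem_commutator hx hy
      rw [hbot] at h
      exact commutatorElement_eq_one_iff_commute.mp (Subgroup.mem_bot.mp h)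
    obtain ⟨⟨b, hbB⟩, hb1⟩ := (Subgroup.ne_bot_iff_exists_ne_one.mp hB)
    refine ⟨derivedSeries Q m', derivedSeries_normal Q m', hBab, b, hbB, ?_⟩
    have hbZ : b ∉ Subgroup.center Q := by
      rw [hz, Subgroup.mem_bot]
      exact fun h => hb1 (Subtype.ext h)
    rw [Subgroup.mem_center_iff] at hbZ
    push_neg at hbZ
    obtain ⟨q, hq⟩ := hbZ
    exact ⟨q, fun h => hq h.symm⟩
  · -- center nontrivial: Q is a p-group
    obtain ⟨⟨z, hzc⟩, hz1⟩ := Subgroup.ne_bot_iff_exists_ne_one.mp hz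
    have hz1' : z ≠ 1 := fun h => hz1 (Subtype.ext h)
    have hzo : IsPrimePow (orderOf z) := (hpp z).resolve_left hz1'
    obtain ⟨p, k, hp, hk, hpk⟩ := hzo
    have hp' : Nat.Prime p := hp.nat_prime
    have hzc' : ∀ g : Q, g * z = z * g := Subgroup.mem_center_iff.mp hzc
    have hQp : IsPGroup p Q := by
      intro q
      rcases hpp q with rfl | hq
      · exact ⟨0, by simp⟩
      obtain ⟨r, j, hr, hj, hrj⟩ := hq
      have hr' : Nat.Prime r := hr.nat_prime
      rcases eq_or_ne r p with rfl | hrp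
      · exact ⟨j, by rw [hrj]; exact pow_orderOf_eq_one q⟩
      exfalso
      have hcomm : Commute z q := (hzc' q).symm
      have hcop : Nat.Coprime (orderOf z) (orderOf q) := by
        rw [← hpk, ← hrj]
        exact ((Nat.coprime_primes hp' hr').mpr (fun h => hrp h.symm)).pow k j
      have horder : orderOf (z * q) = orderOf z * orderOf q :=
        Commute.orderOf_mul_eq_mul_orderOf_of_coprime hcomm hcop
      have hne1 : z * q ≠ 1 := by
        intro h
        have h1 : orderOf (z * q) = 1 := by rw [h, orderOf_one]
        rw [horder, ← hpk, ← hrj] at h1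
        have hpd : p ∣ 1 := h1 ▸ dvd_mul_of_dvd_left (dvd_pow_self p hk.ne') _
        exact hp'.one_lt.ne' (Nat.eq_one_of_dvd_one hpd)
      obtain ⟨s, t, hs, ht, hst⟩ := (hpp (z * q)).resolve_left hne1
      have hs' : Nat.Prime s := hs.nat_prime
      have hpdvd : p ∣ s ^ t := by
        rw [hst, horder, ← hpk]
        exact dvd_mul_of_dvd_left (dvd_pow_self p hk.ne') _
      have hrdvd : r ∣ s ^ t := by
        rw [hst, horder, ← hrj]
        exact dvd_mul_of_dvd_right (dvd_pow_self r hj.ne') _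
      have hps : p = s := (Nat.prime_dvd_prime_iff_eq hp' hs').mp (hp'.dvd_of_dvd_pow hpdvd)
      have hrs : r = s := (Nat.prime_dvd_prime_iff_eq hr' hs').mp (hr'.dvd_of_dvd_pow hrdvd)
      exact hrp (hrs.trans hps.symm)
    haveI : Fact p.Prime := ⟨hp'⟩
    have hZtop : Subgroup.center Q ≠ ⊤ := by
      intro h
      exact hab ((Subgroup.mem_center_iff.mp (h ▸ Subgroup.mem_top a₀)) b₀).symm
    obtain ⟨g₀, hg₀⟩ : ∃ g : Q, g ∉ Subgroup.center Q := by
      by_contra h; push_neg at h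
      exact hZtop ((Subgroup.eq_top_iff' _).mpr h)
    haveI hQZnt : Nontrivial (Q ⧸ Subgroup.center Q) := by
      refine ⟨⟨(g₀ : Q ⧸ Subgroup.center Q), 1, ?_⟩⟩
      rw [Ne, QuotientGroup.eq_one_iff]
      exact hg₀
    haveI := (hQp.to_quotient (Subgroup.center Q)).center_nontrivial
    obtain ⟨⟨xb, hxbc⟩, hxb1⟩ :=
      exists_ne (1 : Subgroup.center (Q ⧸ Subgroup.center Q))
    have hxbne : xb ≠ 1 := fun h => hxb1 (Subtype.ext h)
    obtain ⟨x, rfl⟩ := QuotientGroup.mk_surjective xb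
    have hxZ : x ∉ Subgroup.center Q := fun h => hxbne ((QuotientGroup.eq_one_iff x).mpr h)
    have hxcomm : ∀ g : Q, x⁻¹ * (g * x * g⁻¹) ∈ Subgroup.center Q := by
      intro g
      rw [← QuotientGroup.eq_one_iff (N := Subgroup.center Q)]
      have hc := Subgroup.mem_center_iff.mp hxbc ((g : Q ⧸ Subgroup.center Q))
      show ((x⁻¹ * (g * x * g⁻¹) : Q) : Q ⧸ Subgroup.center Q) = 1
      rw [QuotientGroup.mk_mul, QuotientGroup.mk_mul, QuotientGroup.mk_mul,
        QuotientGroup.mk_inv, QuotientGroup.mk_inv, hc]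
      group
    have hmulform : ∀ c ∈ Subgroup.center Q, ∀ c' ∈ Subgroup.center Q, ∀ m m' : ℤ,
        (c * x ^ m) * (c' * x ^ m') = (c * c') * x ^ (m + m') := by
      intro c hc c' hc' m m'
      have h := Subgroup.mem_center_iff.mp hc' (x ^ m)
      rw [zpow_add, mul_assoc, ← mul_assoc (x ^ m), h]
      group
    -- the abelian normal noncentral subgroup
    refine ⟨{ carrier := {g | ∃ c ∈ Subgroup.center Q, ∃ n : ℤ, g = c * x ^ n}
            , one_mem' := ⟨1, one_mem _, 0, by simp⟩
            , mul_mem' := ?_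
            , inv_mem' := ?_ }, ?_, ?_, ?_⟩
    · rintro a b ⟨c₁, hc₁, n₁, rfl⟩ ⟨c₂, hc₂, n₂, rfl⟩
      exact ⟨c₁ * c₂, mul_mem hc₁ hc₂, n₁ + n₂, hmulform c₁ hc₁ c₂ hc₂ n₁ n₂⟩
    · rintro a ⟨c, hc, n, rfl⟩
      refine ⟨c⁻¹, inv_mem hc, -n, ?_⟩
      have h2 := Subgroup.mem_center_iff.mp (inv_mem hc) (x ^ (-n))
      rw [mul_inv_rev, ← zpow_neg, h2]
    · -- normal
      constructor
      rintro a ⟨c, hc, n, rfl⟩ g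
      have hd := hxcomm g
      set d := x⁻¹ * (g * x * g⁻¹) with hdd
      have hgx : g * x * g⁻¹ = x * d := by rw [hdd]; group
      have hcomm : Commute x d := Subgroup.mem_center_iff.mp hd x
      refine ⟨c * d ^ n, mul_mem hc (zpow_mem hd n), n, ?_⟩
      have hcc := Subgroup.mem_center_iff.mp hc
      have hdn := Subgroup.mem_center_iff.mp (zpow_mem hd n) (x ^ n)
      calc g * (c * x ^ n) * g⁻¹
          = c * (g * x ^ n * g⁻¹) := by rw [← mul_assoc g c, hcc g]; group
        _ = c * (g * x * g⁻¹) ^ n := by rw [conj_zpow]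
        _ = c * (x * d) ^ n := by rw [hgx]
        _ = c * (x ^ n * d ^ n) := by rw [hcomm.mul_zpow]
        _ = c * d ^ n * x ^ n := by rw [hdn]; group
    · -- abelian
      rintro a ⟨c₁, hc₁, n₁, rfl⟩ b ⟨c₂, hc₂, n₂, rfl⟩
      rw [hmulform c₁ hc₁ c₂ hc₂ n₁ n₂, hmulform c₂ hc₂ c₁ hc₁ n₂ n₁,
        Subgroup.mem_center_iff.mp hc₁ c₂, add_comm n₂ n₁]
    · -- noncentral
      refine ⟨x, ⟨1, one_mem _, 1, by simp⟩, ?_⟩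
      rw [Subgroup.mem_center_iff] at hxZ
      push_neg at hxZ
      obtain ⟨q, hq⟩ := hxZ
      exact ⟨q, fun h => hq h.symm⟩

open scoped commutatorElement in
theorem mainthm (G : Type) [Group G] [Fintype G]
    (hsolv : IsSolvable G)
    (hpp : ∀ g : G, g = 1 ∨ IsPrimePow (orderOf g)) :
    ∀ H N : Subgroup G, (N ≤ H ∧ ∀ h ∈ H, ∀ k ∈ N, h * k * h⁻¹ ∈ N) →
    ((∀ a ∈ H, ∀ b ∈ H, a⁻¹ * b⁻¹ * a * b ∈ N) ∨
      ∃ A : Subgroup G, N ≤ A ∧ A ≤ H ∧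
        (∀ h ∈ H, ∀ a ∈ A, h * a * h⁻¹ ∈ A) ∧
        (∀ a ∈ A, ∀ b ∈ A, a⁻¹ * b⁻¹ * a * b ∈ N) ∧
        ∃ a ∈ A, ∃ h ∈ H, a⁻¹ * h⁻¹ * a * h ∉ N) := by
  classical
  rintro H N ⟨hNle, hNconj⟩
  haveI hN' : (N.subgroupOf H).Normal := by
    constructor
    intro n hn g
    rw [Subgroup.mem_subgroupOf] at hn ⊢
    push_cast
    exact hNconj g g.2 n hn
  set Q := ↥H ⧸ N.subgroupOf H with hQ
  haveI : Finite Q := Quotient.finite _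
  have hppQ : ∀ q : Q, q = 1 ∨ IsPrimePow (orderOf q) := by
    intro q
    obtain ⟨a, rfl⟩ := QuotientGroup.mk_surjective q
    by_cases h1 : (QuotientGroup.mk a : Q) = 1
    · exact Or.inl h1
    right
    have hdvd : orderOf (QuotientGroup.mk a : Q) ∣ orderOf a :=
      orderOf_map_dvd (QuotientGroup.mk' (N.subgroupOf H)) a
    have hcoe : orderOf ((a : G)) = orderOf a := orderOf_injective H.subtype H.subtype_injective a
    rcases hpp (a : G) with hone | hppa
    · exfalso
      have ha1 : a = 1 := Subtype.ext (by simpa using hone)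
      exact h1 (by rw [ha1]; exact (QuotientGroup.eq_one_iff (1 : ↥H)).mpr (one_mem _))
    · refine dvd_isPrimePow' (hcoe ▸ hppa) hdvd ?_
      intro hord
      exact h1 (orderOf_eq_one_iff.mp hord)
  rcases keyC Q (by haveI : Group.IsSolvable G := hsolv; exact (inferInstance : Group.IsSolvable (↥H ⧸ N.subgroupOf H))) hppQ with hcomm | ⟨B, hBnorm, hBab, b, hbB, q, hbq⟩
  · left
    intro a ha b hb
    set a' : ↥H := ⟨a, ha⟩
    set b' : ↥H := ⟨b, hb⟩
    have hone : ⁅(QuotientGroup.mk a' : Q)⁻¹, (QuotientGroup.mk b' : Q)⁻¹⁆ = 1 :=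
      commutatorElement_eq_one_iff_commute.mpr
        ((Commute.inv_inv (hcomm (QuotientGroup.mk a') (QuotientGroup.mk b'))))
    have hmk : (QuotientGroup.mk (a'⁻¹ * b'⁻¹ * a' * b') : Q) = 1 := by
      rw [show ((a'⁻¹ * b'⁻¹ * a' * b' : ↥H) : Q)
          = ⁅(QuotientGroup.mk a' : Q)⁻¹, (QuotientGroup.mk b' : Q)⁻¹⁆ by
        simp only [commutatorElement_def, QuotientGroup.mk_mul, QuotientGroup.mk_inv, inv_inv]]
      exact hone
    have hmem := (QuotientGroup.eq_one_iff _).mp hmk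
    rw [Subgroup.mem_subgroupOf] at hmem
    push_cast at hmem
    exact hmem
  · right
    refine ⟨Subgroup.map H.subtype (B.comap (QuotientGroup.mk' (N.subgroupOf H))),
      ?_, ?_, ?_, ?_, ?_⟩
    · intro n hn
      refine Subgroup.mem_map.mpr ⟨⟨n, hNle hn⟩, ?_, rfl⟩
      show QuotientGroup.mk' (N.subgroupOf H) _ ∈ B
      have : QuotientGroup.mk' (N.subgroupOf H) ⟨n, hNle hn⟩ = (1 : Q) :=
        (QuotientGroup.eq_one_iff _).mpr (Subgroup.mem_subgroupOf.mpr hn)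
      rw [this]; exact B.one_mem
    · rintro g ⟨x, hx, rfl⟩
      exact x.2
    · rintro h hh a ⟨x, hx, rfl⟩
      refine Subgroup.mem_map.mpr ⟨⟨h, hh⟩ * x * ⟨h, hh⟩⁻¹, ?_, rfl⟩
      show QuotientGroup.mk' (N.subgroupOf H) _ ∈ B
      rw [map_mul, map_mul, map_inv]
      exact hBnorm.conj_mem _ hx _
    · rintro a ⟨x, hx, rfl⟩ b ⟨y, hy, rfl⟩
      have hxy : (QuotientGroup.mk' (N.subgroupOf H) x) * (QuotientGroup.mk' (N.subgroupOf H) y)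
          = (QuotientGroup.mk' (N.subgroupOf H) y) * (QuotientGroup.mk' (N.subgroupOf H) x) :=
        hBab _ hx _ hy
      have hone : ⁅(QuotientGroup.mk x : Q)⁻¹, (QuotientGroup.mk y : Q)⁻¹⁆ = 1 :=
        commutatorElement_eq_one_iff_commute.mpr (Commute.inv_inv hxy)
      have hmk : (QuotientGroup.mk (x⁻¹ * y⁻¹ * x * y) : Q) = 1 := by
        rw [show ((x⁻¹ * y⁻¹ * x * y : ↥H) : Q)
            = ⁅(QuotientGroup.mk x : Q)⁻¹, (QuotientGroup.mk y : Q)⁻¹⁆ by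
          simp only [commutatorElement_def, QuotientGroup.mk_mul, QuotientGroup.mk_inv, inv_inv]]
        exact hone
      have hmem := (QuotientGroup.eq_one_iff _).mp hmk
      rw [Subgroup.mem_subgroupOf] at hmem
      push_cast at hmem
      exact hmem
    · obtain ⟨x, rfl⟩ := QuotientGroup.mk_surjective b
      obtain ⟨y, rfl⟩ := QuotientGroup.mk_surjective q
      refine ⟨(x : G), Subgroup.mem_map.mpr ⟨x, hbB, rfl⟩, (y : G), y.2, ?_⟩
      intro hmem
      have hmem' : x⁻¹ * y⁻¹ * x * y ∈ N.subgroupOf H := by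
        rw [Subgroup.mem_subgroupOf]; exact hmem
      have hmk : (QuotientGroup.mk (x⁻¹ * y⁻¹ * x * y) : Q) = 1 :=
        (QuotientGroup.eq_one_iff _).mpr hmem'
      rw [show ((x⁻¹ * y⁻¹ * x * y : ↥H) : Q)
          = ⁅(QuotientGroup.mk x : Q)⁻¹, (QuotientGroup.mk y : Q)⁻¹⁆ by
        simp only [commutatorElement_def, QuotientGroup.mk_mul, QuotientGroup.mk_inv, inv_inv]] at hmk
      have hc := commutatorElement_eq_one_iff_commute.mp hmk
      have := hc.inv_inv
      simp only [inv_inv] at this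
      exact hbq this

open GenStrongMonomial in
/-- Every finite solvable group all of whose elements have prime power
order belongs to the class `𝒞`. -/
theorem solvable_primePowerOrders_mem_classC (G : Type) [Group G] [Fintype G]
    (hsolv : IsSolvable G)
    (hpp : ∀ g : G, g = 1 ∨ IsPrimePow (orderOf g)) :
    InClassC G :=
  fun H N hNH => mainthm G hsolv hpp H N hNH
end
end

section
/- Let G be a finite group, N ⊴ G, and let φ be a linear complex character of N. Then the inertia group I_G(φ) is a normal subgroup of N_G(ker φ), the normalizer in G of the kernel of φ. -/
/- Common framework for formalizing "A generalization of strongly monomial groups"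
   (Bakshi–Kaur).  The rational group algebra ℚG is modelled inside the complex
   group algebra `MonoidAlgebra ℂ G` (rationality of coefficients is imposed
   explicitly where the statements require it). -/

noncomputable section

open MonoidAlgebra

attribute [local instance] Classical.propDecidable

open GenStrongMonomial in
/-- for a linear character `φ` of `N ⊴ G`, the inertia group `I_G(φ)`
is a normal subgroup of `N_G(ker φ)`. -/
theorem inertia_normal_in_normalizer_ker (G : Type) [Group G] [Fintype G]
    (N : Subgroup G) (hN : N.Normal)
    (φ : ↥N → ℂ) (hmul : ∀ a b : ↥N, φ (a * b) = φ a * φ b) (hdeg : φ 1 = 1) :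
    inertia N hN φ ≤
        Subgroup.setNormalizer {g : G | ∃ h : g ∈ N, φ ⟨g, h⟩ = φ 1} ∧
      ∀ x ∈ Subgroup.setNormalizer {g : G | ∃ h : g ∈ N, φ ⟨g, h⟩ = φ 1},
        ∀ t ∈ inertia N hN φ, x * t * x⁻¹ ∈ inertia N hN φ := by
  set S : Set G := {g : G | ∃ h : g ∈ N, φ ⟨g, h⟩ = φ 1} with hSdef
  have hval : ∀ n : ↥N, φ n * φ n⁻¹ = 1 := by
    intro n; rw [← hmul, mul_inv_cancel, hdeg]
  have hne : ∀ n : ↥N, (φ n) ≠ 0 := by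
    intro n h
    have := hval n
    rw [h, zero_mul] at this
    exact zero_ne_one this
  have hinv : ∀ n : ↥N, φ n⁻¹ = (φ n)⁻¹ := by
    intro n
    exact (inv_eq_of_mul_eq_one_right (hval n)).symm
  have hmemS : ∀ n : ↥N, (n : G) ∈ S ↔ φ n = 1 := by
    intro n
    constructor
    · rintro ⟨h, hφ⟩
      rw [hdeg] at hφ
      exact hφ
    · intro h
      exact ⟨n.2, by rw [hdeg]; exact h⟩
  have hdiff : ∀ m n : ↥N, ((m : G) * (n : G)⁻¹ ∈ S) ↔ φ m = φ n := by
    intro m n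
    have : ((m * n⁻¹ : ↥N) : G) = (m : G) * (n : G)⁻¹ := rfl
    rw [← this, hmemS, hmul, hinv, mul_inv_eq_one₀ (hne n)]
  constructor
  · intro t ht
    have ht' : conjCharN N hN φ t = φ := ht
    have hti : ∀ n : ↥N, φ ⟨t * (n : G) * t⁻¹, hN.conj_mem _ n.2 _⟩ = φ n :=
      fun n => congrFun ht' n
    intro g
    constructor
    · rintro ⟨hg, hφg⟩
      refine ⟨hN.conj_mem _ hg _, ?_⟩
      rw [hti ⟨g, hg⟩]; exact hφg
    · rintro ⟨hg, hφg⟩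
      have hgN : g ∈ N := by
        have := hN.conj_mem _ hg t⁻¹
        simpa [mul_assoc] using this
      refine ⟨hgN, ?_⟩
      rw [← hti ⟨g, hgN⟩]; exact hφg
  · intro x hx t ht
    have ht' : conjCharN N hN φ t = φ := ht
    have hx' : ∀ n : G, n ∈ S ↔ x * n * x⁻¹ ∈ S := hx
    show conjCharN N hN φ (x * t * x⁻¹) = φ
    funext n
    have hmN : x⁻¹ * (n : G) * x ∈ N := by
      have := hN.conj_mem _ n.2 x⁻¹
      simpa [mul_assoc] using this
    set m : ↥N := ⟨x⁻¹ * (n : G) * x, hmN⟩ with hm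
    set k : ↥N := ⟨t * (m : G) * t⁻¹, hN.conj_mem _ m.2 _⟩ with hk
    have h1 : φ k = φ m := congrFun ht' m
    have h2 : (k : G) * (m : G)⁻¹ ∈ S := (hdiff k m).2 h1
    have h3 : x * ((k : G) * (m : G)⁻¹) * x⁻¹ ∈ S := (hx' _).1 h2
    set u : ↥N := ⟨(x * t * x⁻¹) * (n : G) * (x * t * x⁻¹)⁻¹,
      hN.conj_mem _ n.2 _⟩ with hu
    have h4 : x * ((k : G) * (m : G)⁻¹) * x⁻¹ = (u : G) * (n : G)⁻¹ := by
      simp only [hu, hk, hm]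
      group
    rw [h4] at h3
    have h5 : φ u = φ n := (hdiff u n).1 h3
    exact h5
end
end

section
/- Let G be a finite group, χ ∈ Irr(G), N ⊴ G, let φ be a linear irreducible constituent of χ_N, and let ψ ∈ Irr(I_G(φ)) be the Clifford correspondent of χ with respect to φ. Then for every g ∈ G \ N_G(ker φ), the idempotents e_ℚ(ψ) and e_ℚ(ψ)^g of ℚG are mutually orthogonal, i.e., e_ℚ(ψ)·e_ℚ(ψ)^g = 0. -/
/- Common framework for formalizing "A generalization of strongly monomial groups"
   (Bakshi–Kaur).  The rational group algebra ℚG is modelled inside the complex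
   group algebra `MonoidAlgebra ℂ G` (rationality of coefficients is imposed
   explicitly where the statements require it). -/

noncomputable section

open MonoidAlgebra

attribute [local instance] Classical.propDecidable

namespace GenStrongMonomialAux
open GenStrongMonomial CategoryTheory

lemma phi_pow {M : Type} [Group M] (φ : M → ℂ) (hmul : ∀ a b : M, φ (a*b) = φ a * φ b)
    (hdeg : φ 1 = 1) (m : M) (k : ℕ) : φ (m ^ k) = φ m ^ k := by
  induction k with
  | zero => simpa using hdeg
  | succ n ih => rw [pow_succ, hmul, ih, pow_succ]

lemma conj_phi_mul {M : Type} [Group M] [Finite M] (φ : M → ℂ)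
    (hmul : ∀ a b : M, φ (a*b) = φ a * φ b) (hdeg : φ 1 = 1) (m : M) :
    (starRingEnd ℂ) (φ m) * φ m = 1 := by
  cases nonempty_fintype M
  have h : φ m ^ Fintype.card M = 1 := by
    rw [← phi_pow φ hmul hdeg, pow_card_eq_one, hdeg]
  have habs : ‖φ m‖ = 1 := by
    have h1 : ‖φ m‖ ^ Fintype.card M = 1 ^ Fintype.card M := by
      rw [← norm_pow, h, norm_one, one_pow]
    exact (pow_left_inj₀ (norm_nonneg _) zero_le_one Fintype.card_ne_zero).mp h1
  rw [mul_comm, Complex.mul_conj, Complex.normSq_eq_norm_sq, habs]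
  norm_num

lemma galSum_congr {α : Type} (ψ : α → ℂ) {a b : α} (h : ψ a = ψ b) :
    galSum ψ a = galSum ψ b := by
  unfold galSum
  have : (⟨ψ a, mem_ratField ψ a⟩ : ratField ψ) = ⟨ψ b, mem_ratField ψ b⟩ := Subtype.ext h
  simp only [this]

lemma galSum_eq_zero_of_infinite {α : Type} (ψ : α → ℂ)
    (h : Infinite (ratField ψ ≃ₐ[ℚ] ratField ψ)) (a : α) : galSum ψ a = 0 := by
  unfold galSum
  by_cases hx : ψ a = 0
  · have hzero : (⟨ψ a, mem_ratField ψ a⟩ : ratField ψ) = 0 := by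
      apply Subtype.ext; exact hx
    simp only [hzero, map_zero, ZeroMemClass.coe_zero]
    exact finsum_zero
  · apply finsum_of_infinite_support
    have hsupp : (Function.support fun σ : ratField ψ ≃ₐ[ℚ] ratField ψ =>
        ((σ ⟨ψ a, mem_ratField ψ a⟩ : ratField ψ) : ℂ)) = Set.univ := by
      apply Set.eq_univ_of_forall
      intro σ
      simp only [Function.mem_support]
      intro hc
      apply hx
      have h1 : (σ ⟨ψ a, mem_ratField ψ a⟩ : ratField ψ) = 0 :=
        ZeroMemClass.coe_eq_zero.mp hc
      have h2 : (⟨ψ a, mem_ratField ψ a⟩ : ratField ψ) = 0 :=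
        σ.injective (h1.trans (map_zero σ).symm)
      exact congrArg Subtype.val h2
    rw [hsupp]
    exact Set.infinite_univ

lemma rho_scalar {G : Type} [Group G] [Fintype G] (N I : Subgroup G) (hNI : N ≤ I)
    (V : FDRep ℂ ↥I) [Simple V] (φ : ↥N → ℂ)
    (hmul : ∀ a b : ↥N, φ (a * b) = φ a * φ b) (hdeg : φ 1 = 1)
    (hnorm : ∀ (h : ↥I) (n : ↥N), (↑h : G) * ↑n * (↑h : G)⁻¹ ∈ N)
    (hconj : ∀ (h : ↥I) (n : ↥N), φ ⟨↑h * ↑n * (↑h : G)⁻¹, hnorm h n⟩ = φ n)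
    (hover : (∑ n : ↥N, V.character ⟨↑n, hNI n.2⟩ * (starRingEnd ℂ) (φ n)) ≠ 0) :
    ∀ n : ↥N, V.ρ ⟨↑n, hNI n.2⟩ = φ n • (LinearMap.id : V →ₗ[ℂ] V) := by
  have hconjmul := conj_phi_mul φ hmul hdeg
  let ι : ↥N → ↥I := fun n => ⟨↑n, hNI n.2⟩
  have hι : ∀ a b : ↥N, ι (a * b) = ι a * ι b := fun _ _ => rfl
  set T : V →ₗ[ℂ] V := ∑ n : ↥N, (starRingEnd ℂ) (φ n) • (V.ρ (ι n)) with hT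
  have key : ∀ h : ↥I, (V.ρ h) * T = (∑ n : ↥N, (starRingEnd ℂ) (φ n) • (V.ρ (h * ι n))) := by
    intro h
    rw [hT, Finset.mul_sum]
    exact Finset.sum_congr rfl fun n _ => by rw [mul_smul_comm, ← map_mul]
  have key2 : ∀ h : ↥I, T * (V.ρ h) = (∑ n : ↥N, (starRingEnd ℂ) (φ n) • (V.ρ (ι n * h))) := by
    intro h
    rw [hT, Finset.sum_mul]
    exact Finset.sum_congr rfl fun n _ => by rw [smul_mul_assoc, ← map_mul]
  have hcomm : ∀ h : ↥I, (V.ρ h) * T = T * (V.ρ h) := by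
    intro h
    rw [key h, key2 h]
    have hmem : ∀ n : ↥N, (↑h : G)⁻¹ * ↑n * (↑h : G) ∈ N := by
      intro n
      have := hnorm h⁻¹ n
      have hcoe : (↑(h⁻¹) : G) = (↑h : G)⁻¹ := rfl
      rw [hcoe, inv_inv] at this
      exact this
    let eqv : ↥N ≃ ↥N :=
      { toFun := fun n => ⟨↑h * ↑n * (↑h : G)⁻¹, hnorm h n⟩
        invFun := fun n => ⟨(↑h : G)⁻¹ * ↑n * ↑h, hmem n⟩
        left_inv := fun n => Subtype.ext (by group)
        right_inv := fun n => Subtype.ext (by group) }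
    refine Fintype.sum_equiv eqv _ _ (fun n => ?_)
    show (starRingEnd ℂ) (φ n) • V.ρ (h * ι n) = (starRingEnd ℂ) (φ (eqv n)) • V.ρ (ι (eqv n) * h)
    have h1 : φ (eqv n) = φ n := hconj h n
    have h2 : ι (eqv n) * h = h * ι n := by
      apply Subtype.ext
      show (↑h * ↑n * (↑h : G)⁻¹) * ↑h = (↑h : G) * ↑n
      group
    rw [h1, h2]
  have hSchur : ∃ c : ℂ, T = c • LinearMap.id := by
    let f : V ⟶ V := ⟨ObjectProperty.homMk (ModuleCat.ofHom T), by intro h; ext v; exact LinearMap.congr_fun (hcomm h).symm v⟩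
    obtain ⟨c, hc'⟩ := CategoryTheory.endomorphism_simple_eq_smul_id ℂ f
    exact ⟨c, (congrArg (fun (m : V ⟶ V) => m.hom.hom.hom) hc').symm⟩
  obtain ⟨c, hc⟩ := hSchur
  have htr : LinearMap.trace ℂ V T = ∑ n : ↥N, V.character ⟨↑n, hNI n.2⟩ * (starRingEnd ℂ) (φ n) := by
    rw [hT, map_sum]
    refine Finset.sum_congr rfl fun n _ => ?_
    rw [map_smul, smul_eq_mul, mul_comm]
    rfl
  have hcne : c ≠ 0 := by
    intro h0
    rw [hc, h0, zero_smul] at htr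
    rw [map_zero] at htr
    exact hover htr.symm
  have keym : ∀ m₀ : ↥N, (V.ρ (ι m₀)) * T = φ m₀ • T := by
    intro m₀
    rw [key (ι m₀), hT, Finset.smul_sum]
    refine Fintype.sum_equiv (Equiv.mulLeft m₀) _ _ (fun n => ?_)
    show (starRingEnd ℂ) (φ n) • V.ρ (ι m₀ * ι n)
        = φ m₀ • ((starRingEnd ℂ) (φ (m₀ * n)) • V.ρ (ι (m₀ * n)))
    rw [hι, smul_smul, hmul]
    have hs : φ m₀ * (starRingEnd ℂ) (φ m₀ * φ n) = (starRingEnd ℂ) (φ n) := by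
      rw [map_mul, ← mul_assoc, mul_comm (φ m₀), hconjmul m₀, one_mul]
    rw [hs]
  intro m₀
  have h1 := keym m₀
  rw [hc] at h1
  have h2 : (V.ρ (ι m₀)) * (c • LinearMap.id) = c • (V.ρ (ι m₀)) := by
    ext v; simp
  rw [h2] at h1
  have h3 : φ m₀ • (c • (LinearMap.id : V →ₗ[ℂ] V)) = c • (φ m₀ • LinearMap.id) := by
    rw [smul_smul, smul_smul, mul_comm]
  rw [h3] at h1
  exact smul_right_injective _ hcne h1

theorem main_aux {G : Type} [Group G] [Fintype G] (N : Subgroup G) (hN : N.Normal)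
    (φ : ↥N → ℂ)
    (hmul : ∀ a b : ↥N, φ (a * b) = φ a * φ b) (hdeg : φ 1 = 1)
    (I : Subgroup G) (hNI : N ≤ I)
    (ψ : ↥I → ℂ) (V : FDRep ℂ ↥I) [hVs : Simple V] (hψchar : ψ = V.character)
    (hnorm : ∀ (h : ↥I) (n : ↥N), (↑h : G) * ↑n * (↑h : G)⁻¹ ∈ N)
    (hconj : ∀ (h : ↥I) (n : ↥N), φ ⟨↑h * ↑n * (↑h : G)⁻¹, hnorm h n⟩ = φ n)
    (hover : (∑ n : ↥N, ψ ⟨↑n, hNI n.2⟩ * (starRingEnd ℂ) (φ n)) ≠ 0)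
    (g : G)
    (hg : ¬ ∀ x : G, (∃ h : x ∈ N, φ ⟨x, h⟩ = φ 1) ↔
      (∃ h : g * x * g⁻¹ ∈ N, φ ⟨g * x * g⁻¹, h⟩ = φ 1)) :
    eQ I ψ * conjQA (eQ I ψ) g = 0 := by
  classical
  have hover2 : (∑ n : ↥N, V.character ⟨↑n, hNI n.2⟩ * (starRingEnd ℂ) (φ n)) ≠ 0 := by
    rw [← hψchar]; exact hover
  have hrho := rho_scalar N I hNI V φ hmul hdeg hnorm hconj hover2
  -- character product rules
  have hpsiR : ∀ (h : ↥I) (n : ↥N), ψ (h * ⟨↑n, hNI n.2⟩) = ψ h * φ n := by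
    intro h n
    have hr : V.ρ (h * ⟨↑n, hNI n.2⟩) = φ n • V.ρ h := by
      rw [map_mul, hrho n, mul_smul_comm, ← Module.End.one_eq_id, mul_one]
    rw [hψchar]
    show LinearMap.trace ℂ V (V.ρ (h * ⟨↑n, hNI n.2⟩)) = _
    rw [hr, map_smul, smul_eq_mul, mul_comm]
    rfl
  have hpsiL : ∀ (h : ↥I) (n : ↥N), ψ ((⟨↑n, hNI n.2⟩ : ↥I) * h) = φ n * ψ h := by
    intro h n
    have hr : V.ρ ((⟨↑n, hNI n.2⟩ : ↥I) * h) = φ n • V.ρ h := by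
      rw [map_mul, hrho n, smul_mul_assoc, ← Module.End.one_eq_id, one_mul]
    rw [hψchar]
    show LinearMap.trace ℂ V (V.ρ ((⟨↑n, hNI n.2⟩ : ↥I) * h)) = _
    rw [hr, map_smul, smul_eq_mul]
    rfl
  -- the coefficient function of eQ I ψ
  set c : G → ℂ := fun x =>
    if hx : x ∈ I then ψ 1 / (Nat.card ↥I : ℂ) * galSum ψ ⟨x, hx⟩ else 0 with hcdef
  have he : eQ I ψ = ∑ x : G, single x⁻¹ (c x) := rfl
  -- right-translation invariance of c under the kernel of φ
  have hc_right : ∀ (k : G) (kN : k ∈ N), φ ⟨k, kN⟩ = 1 → ∀ x : G, c (x * k) = c x := by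
    intro k kN hk1 x
    have hkI : k ∈ I := hNI kN
    by_cases hx : x ∈ I
    · have hxk : x * k ∈ I := I.mul_mem hx hkI
      simp only [hcdef]
      rw [dif_pos hxk, dif_pos hx]
      congr 1
      apply galSum_congr
      have hmm : (⟨x * k, hxk⟩ : ↥I) = ⟨x, hx⟩ * ⟨↑(⟨k, kN⟩ : ↥N), hNI kN⟩ := Subtype.ext rfl
      rw [hmm, hpsiR ⟨x, hx⟩ ⟨k, kN⟩, hk1, mul_one]
    · have hxk : ¬(x * k ∈ I) := by
        intro hmem
        exact hx (by simpa using I.mul_mem hmem (I.inv_mem hkI))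
      simp only [hcdef]
      rw [dif_neg hxk, dif_neg hx]
  -- left absorption of eQ by kernel elements
  have habsorbL : ∀ (k : G) (kN : k ∈ N), φ ⟨k, kN⟩ = 1 →
      single k (1:ℂ) * eQ I ψ = eQ I ψ := by
    intro k kN hk1
    rw [he, Finset.mul_sum]
    refine Fintype.sum_equiv (Equiv.mulRight k⁻¹) _ _ (fun x => ?_)
    rw [MonoidAlgebra.single_mul_single, one_mul]
    show single (k * x⁻¹) (c x) = single ((x * k⁻¹)⁻¹) (c (x * k⁻¹))
    have h1 : (x * k⁻¹)⁻¹ = k * x⁻¹ := by group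
    have h2 : c (x * k⁻¹) = c x := by
      calc c (x * k⁻¹) = c (x * k⁻¹ * k) := (hc_right k kN hk1 (x * k⁻¹)).symm
        _ = c x := by rw [inv_mul_cancel_right]
    rw [h1, h2]
  -- kernel subgroup
  let Ksub : Subgroup G :=
    { carrier := {x : G | ∃ h : x ∈ N, φ ⟨x, h⟩ = φ 1}
      one_mem' := ⟨N.one_mem, rfl⟩
      mul_mem' := by
        rintro a b ⟨ha, fa⟩ ⟨hb, fb⟩
        refine ⟨N.mul_mem ha hb, ?_⟩
        have hab : (⟨a * b, N.mul_mem ha hb⟩ : ↥N) = ⟨a, ha⟩ * ⟨b, hb⟩ := Subtype.ext rfl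
        rw [hab, hmul, fa, fb, hdeg, mul_one]
      inv_mem' := by
        rintro a ⟨ha, fa⟩
        refine ⟨N.inv_mem ha, ?_⟩
        have h1 : (⟨a⁻¹, N.inv_mem ha⟩ : ↥N) = (⟨a, ha⟩ : ↥N)⁻¹ := Subtype.ext rfl
        have h2 := hmul (⟨a, ha⟩ : ↥N)⁻¹ ⟨a, ha⟩
        rw [inv_mul_cancel, fa, hdeg, mul_one] at h2
        rw [h1, hdeg, ← h2] }
  have memKsub : ∀ x : G, x ∈ Ksub ↔ ∃ h : x ∈ N, φ ⟨x, h⟩ = φ 1 := fun x => Iff.rfl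
  -- conjugated kernel
  let K2 : Subgroup G := Ksub.comap (MulAut.conj g).toMonoidHom
  have memK2 : ∀ x : G, x ∈ K2 ↔ ∃ hx : g * x * g⁻¹ ∈ N, φ ⟨g * x * g⁻¹, hx⟩ = φ 1 := by
    intro x
    rw [Subgroup.mem_comap]
    exact Iff.rfl
  have k2N : ∀ x : G, x ∈ K2 → x ∈ N := by
    intro x hx
    obtain ⟨hmem, -⟩ := (memK2 x).mp hx
    have := hN.conj_mem _ hmem g⁻¹
    have hxx : g⁻¹ * (g * x * g⁻¹) * g⁻¹⁻¹ = x := by group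
    rwa [hxx] at this
  -- an element of K2 outside the kernel
  have hk0 : ∃ k₀ : G, k₀ ∈ K2 ∧ k₀ ∉ Ksub := by
    by_contra hno
    push_neg at hno
    apply hg
    intro x
    have hKfin : (Finset.univ.filter (· ∈ Ksub)).card ≤
        (Finset.univ.filter (· ∈ K2)).card := by
      apply Finset.card_le_card_of_injOn (fun y => g⁻¹ * y * g)
      · intro y hy
        simp only [Finset.coe_filter, Finset.mem_univ, true_and, Set.mem_setOf_eq] at hy ⊢
        rw [memK2]
        have hyy : g * (g⁻¹ * y * g) * g⁻¹ = y := by group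
        rw [hyy]
        exact hy
      · intro a _ b _ hab
        simp only at hab
        have := mul_right_cancel hab
        exact mul_left_cancel this
    have hsubset : (Finset.univ.filter (· ∈ K2)) ⊆ (Finset.univ.filter (· ∈ Ksub)) := by
      intro y hy
      simp only [Finset.mem_filter, Finset.mem_univ, true_and] at hy ⊢
      exact hno y hy
    have heq := Finset.eq_of_subset_of_card_le hsubset hKfin
    have hiff : ∀ y : G, y ∈ K2 ↔ y ∈ Ksub := by
      intro y
      constructor
      · exact hno y
      · intro hy
        have h1 : y ∈ Finset.univ.filter (· ∈ Ksub) :=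
          Finset.mem_filter.mpr ⟨Finset.mem_univ y, hy⟩
        rw [← heq] at h1
        exact (Finset.mem_filter.mp h1).2
    constructor
    · intro hx
      exact (memK2 x).mp ((hiff x).mpr ((memKsub x).mpr hx))
    · intro hx
      exact (memKsub x).mp ((hiff x).mp ((memK2 x).mpr hx))
  -- the character sum over K2 vanishes
  have charSum : (∑ k : ↥K2, φ ⟨↑k, k2N ↑k k.2⟩) = 0 := by
    obtain ⟨k₀, hk₀K2, hk₀n⟩ := hk0
    have hk₀N : k₀ ∈ N := k2N k₀ hk₀K2
    have hk₀phi : φ ⟨k₀, hk₀N⟩ ≠ 1 := by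
      intro h1
      exact hk₀n ((memKsub k₀).mpr ⟨hk₀N, by rw [h1, hdeg]⟩)
    have hstep : (∑ k : ↥K2, φ ⟨↑k, k2N ↑k k.2⟩)
        = φ ⟨k₀, hk₀N⟩ * ∑ k : ↥K2, φ ⟨↑k, k2N ↑k k.2⟩ := by
      rw [Finset.mul_sum]
      refine Fintype.sum_equiv (Equiv.mulLeft (⟨k₀, hk₀K2⟩ : ↥K2)⁻¹) _ _ (fun k => ?_)
      show φ ⟨↑k, k2N ↑k k.2⟩ = φ ⟨k₀, hk₀N⟩ * φ ⟨↑((⟨k₀, hk₀K2⟩ : ↥K2)⁻¹ * k), _⟩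
      rw [← hmul]
      apply congrArg φ
      apply Subtype.ext
      show (↑k : G) = k₀ * (k₀⁻¹ * ↑k)
      group
    have h2 : (φ ⟨k₀, hk₀N⟩ - 1) * (∑ k : ↥K2, φ ⟨↑k, k2N ↑k k.2⟩) = 0 := by
      rw [sub_mul, one_mul, ← hstep, sub_self]
    rcases mul_eq_zero.mp h2 with h3 | h3
    · exact absurd (by linear_combination h3 : φ ⟨k₀, hk₀N⟩ = 1) hk₀phi
    · exact h3
  -- inner coefficient sums vanish
  have hinner : ∀ x : G, (∑ k : ↥K2, c (↑k * x)) = 0 := by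
    intro x
    by_cases hx : x ∈ I
    · have memkx : ∀ k : ↥K2, (↑k : G) * x ∈ I :=
        fun k => I.mul_mem (hNI (k2N ↑k k.2)) hx
      have hterm : ∀ k : ↥K2, c (↑k * x)
          = ψ 1 / (Nat.card ↥I : ℂ) * galSum ψ ⟨↑k * x, memkx k⟩ := by
        intro k
        simp only [hcdef]
        rw [dif_pos (memkx k)]
      rw [Finset.sum_congr rfl (fun k _ => hterm k), ← Finset.mul_sum]
      have hpsisum : (∑ k : ↥K2, ψ ⟨↑k * x, memkx k⟩) = 0 := by
        have hterm2 : ∀ k : ↥K2, ψ ⟨↑k * x, memkx k⟩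
            = φ ⟨↑k, k2N ↑k k.2⟩ * ψ ⟨x, hx⟩ := by
          intro k
          have hmm : (⟨↑k * x, memkx k⟩ : ↥I)
              = (⟨↑(⟨↑k, k2N ↑k k.2⟩ : ↥N), hNI (k2N ↑k k.2)⟩ : ↥I) * ⟨x, hx⟩ :=
            Subtype.ext rfl
          rw [hmm, hpsiL]
        rw [Finset.sum_congr rfl (fun k _ => hterm2 k), ← Finset.sum_mul, charSum, zero_mul]
      have hgal : (∑ k : ↥K2, galSum ψ ⟨↑k * x, memkx k⟩) = 0 := by
        rcases finite_or_infinite (ratField ψ ≃ₐ[ℚ] ratField ψ) with hfin | hinf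
        · letI := Fintype.ofFinite (ratField ψ ≃ₐ[ℚ] ratField ψ)
          have hexp : ∀ k : ↥K2, galSum ψ ⟨↑k * x, memkx k⟩
              = ∑ σ : ratField ψ ≃ₐ[ℚ] ratField ψ,
                ((σ ⟨ψ ⟨↑k * x, memkx k⟩, mem_ratField ψ _⟩ : ratField ψ) : ℂ) := by
            intro k
            unfold galSum
            exact finsum_eq_sum_of_fintype _
          rw [Finset.sum_congr rfl (fun k _ => hexp k), Finset.sum_comm]
          refine Finset.sum_eq_zero fun σ _ => ?_
          have hzero : (∑ k : ↥K2,
              (⟨ψ ⟨↑k * x, memkx k⟩, mem_ratField ψ _⟩ : ratField ψ)) = 0 := by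
            apply ZeroMemClass.coe_eq_zero.mp
            rw [AddSubmonoidClass.coe_finset_sum]
            exact hpsisum
          calc (∑ k : ↥K2,
              ((σ ⟨ψ ⟨↑k * x, memkx k⟩, mem_ratField ψ _⟩ : ratField ψ) : ℂ))
              = ((σ (∑ k : ↥K2,
                  (⟨ψ ⟨↑k * x, memkx k⟩, mem_ratField ψ _⟩ : ratField ψ)) : ratField ψ) : ℂ) := by
                rw [map_sum, AddSubmonoidClass.coe_finset_sum]
            _ = 0 := by rw [hzero, map_zero, ZeroMemClass.coe_zero]
        · exact Finset.sum_eq_zero fun k _ => galSum_eq_zero_of_infinite ψ hinf _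
      rw [hgal, mul_zero]
    · refine Finset.sum_eq_zero fun k _ => ?_
      have hnm : ¬((↑k : G) * x ∈ I) := by
        intro hmem
        apply hx
        have := I.mul_mem (I.inv_mem (hNI (k2N ↑k k.2))) hmem
        rwa [inv_mul_cancel_left] at this
      simp only [hcdef]
      rw [dif_neg hnm]
  -- claim A
  have claimA : (∑ k : ↥K2, eQ I ψ * single (↑k : G) (1:ℂ)) = 0 := by
    have step1 : ∀ k : ↥K2, eQ I ψ * single (↑k : G) (1:ℂ)
        = ∑ x : G, single x⁻¹ (c (↑k * x)) := by
      intro k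
      rw [he, Finset.sum_mul]
      refine Fintype.sum_equiv (Equiv.mulLeft (↑k : G)⁻¹) _ _ (fun x => ?_)
      rw [MonoidAlgebra.single_mul_single, mul_one]
      show single (x⁻¹ * ↑k) (c x) = single ((↑k : G)⁻¹ * x)⁻¹ (c (↑k * ((↑k : G)⁻¹ * x)))
      have h1 : ((↑k : G)⁻¹ * x)⁻¹ = x⁻¹ * ↑k := by group
      have h2 : (↑k : G) * ((↑k : G)⁻¹ * x) = x := by group
      rw [h1, h2]
    rw [Finset.sum_congr rfl (fun k _ => step1 k), Finset.sum_comm]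
    refine Finset.sum_eq_zero fun x _ => ?_
    have := map_sum (MonoidAlgebra.singleAddHom (R := ℂ) x⁻¹) (fun k : ↥K2 => c (↑k * x)) Finset.univ
    calc (∑ k : ↥K2, single x⁻¹ (c (↑k * x)))
        = single x⁻¹ (∑ k : ↥K2, c (↑k * x)) := this.symm
      _ = 0 := by rw [hinner x]; exact MonoidAlgebra.single_zero _
  -- absorption on the right factor
  have habsorbR : ∀ k : ↥K2,
      single (↑k : G) (1:ℂ) * conjQA (eQ I ψ) g = conjQA (eQ I ψ) g := by
    intro k
    obtain ⟨hkN, hkphi⟩ := (memK2 ↑k).mp k.2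
    have hphi1 : φ ⟨g * ↑k * g⁻¹, hkN⟩ = 1 := by rw [hkphi, hdeg]
    show single (↑k : G) (1:ℂ) * (single g⁻¹ (1:ℂ) * eQ I ψ * single g (1:ℂ)) = _
    have hstep : single (↑k : G) (1:ℂ) * (single g⁻¹ (1:ℂ) * eQ I ψ * single g (1:ℂ))
        = single g⁻¹ (1:ℂ) * (single (g * ↑k * g⁻¹) (1:ℂ) * eQ I ψ) * single g (1:ℂ) := by
      have h1 : single (↑k : G) (1:ℂ) * single g⁻¹ (1:ℂ)
          = single g⁻¹ (1:ℂ) * single (g * ↑k * g⁻¹) (1:ℂ) := by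
        rw [MonoidAlgebra.single_mul_single, MonoidAlgebra.single_mul_single, one_mul]
        congr 1
        group
      calc single (↑k : G) (1:ℂ) * (single g⁻¹ (1:ℂ) * eQ I ψ * single g (1:ℂ))
          = (single (↑k : G) (1:ℂ) * single g⁻¹ (1:ℂ)) * eQ I ψ * single g (1:ℂ) := by
            rw [mul_assoc, mul_assoc, mul_assoc]
        _ = (single g⁻¹ (1:ℂ) * single (g * ↑k * g⁻¹) (1:ℂ)) * eQ I ψ * single g (1:ℂ) := by
            rw [h1]
        _ = single g⁻¹ (1:ℂ) * (single (g * ↑k * g⁻¹) (1:ℂ) * eQ I ψ) * single g (1:ℂ) := by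
            rw [mul_assoc (single g⁻¹ (1:ℂ))]
    rw [hstep, habsorbL (g * ↑k * g⁻¹) hkN hphi1]
    rfl
  -- final assembly
  have hfinal : (∑ _k : ↥K2, eQ I ψ * conjQA (eQ I ψ) g) = 0 := by
    calc (∑ _k : ↥K2, eQ I ψ * conjQA (eQ I ψ) g)
        = ∑ k : ↥K2, eQ I ψ * (single (↑k : G) (1:ℂ) * conjQA (eQ I ψ) g) := by
          exact Finset.sum_congr rfl fun k _ => by rw [habsorbR k]
      _ = ∑ k : ↥K2, (eQ I ψ * single (↑k : G) (1:ℂ)) * conjQA (eQ I ψ) g := by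
          exact Finset.sum_congr rfl fun k _ => by rw [mul_assoc]
      _ = (∑ k : ↥K2, eQ I ψ * single (↑k : G) (1:ℂ)) * conjQA (eQ I ψ) g :=
          (Finset.sum_mul _ _ _).symm
      _ = 0 := by rw [claimA, zero_mul]
  rw [Finset.sum_const, Finset.card_univ] at hfinal
  have hcard : (Fintype.card ↥K2 : ℂ) ≠ 0 := by
    exact_mod_cast Fintype.card_ne_zero
  have := hfinal
  rw [← Nat.cast_smul_eq_nsmul ℂ] at this
  exact (smul_eq_zero.mp this).resolve_left hcard

end GenStrongMonomialAux

open GenStrongMonomial in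
/-- for the Clifford correspondent `ψ ∈ Irr(I_G(φ))` of `χ ∈ Irr(G)`
w.r.t. a linear constituent `φ` of `χ_N`, the idempotents `e_ℚ(ψ)` and `e_ℚ(ψ)^g` are
orthogonal for every `g ∉ N_G(ker φ)`. -/
theorem eQ_orthogonal_outside_normalizer (G : Type) [Group G] [Fintype G]
    (N : Subgroup G) (hN : N.Normal)
    (χ : G → ℂ) (hχ : IsIrrChar G χ)
    (φ : ↥N → ℂ) (hφ : IsIrrChar ↥N φ)
    (hconst : innerChar ↥N (fun n => χ ↑n) φ ≠ 0)
    (hmul : ∀ a b : ↥N, φ (a * b) = φ a * φ b) (hdeg : φ 1 = 1)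
    (ψ : ↥(inertia N hN φ) → ℂ) (hψ : IsIrrChar ↥(inertia N hN φ) ψ)
    (hNI : N ≤ inertia N hN φ)
    (hover : innerChar ↥N (fun n => ψ ⟨↑n, hNI n.2⟩) φ ≠ 0)
    (hCliff : ind (inertia N hN φ) ψ = χ) :
    ∀ g : G, g ∉ Subgroup.setNormalizer {x : G | ∃ h : x ∈ N, φ ⟨x, h⟩ = φ 1} →
      eQ (inertia N hN φ) ψ * conjQA (eQ (inertia N hN φ) ψ) g = 0 := by
  classical
  intro g hg
  obtain ⟨V, hVs, hψchar⟩ := hψ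
  haveI := hVs
  have hnorm : ∀ (h : ↥(inertia N hN φ)) (n : ↥N), (↑h : G) * ↑n * (↑h : G)⁻¹ ∈ N :=
    fun h n => hN.conj_mem ↑n n.2 ↑h
  have hconj : ∀ (h : ↥(inertia N hN φ)) (n : ↥N), φ ⟨↑h * ↑n * (↑h : G)⁻¹, hnorm h n⟩ = φ n := by
    intro h n
    have hcI : conjCharN N hN φ ↑h = φ := h.2
    exact congrFun hcI n
  have hover2 : (∑ n : ↥N, ψ ⟨↑n, hNI n.2⟩ * (starRingEnd ℂ) (φ n)) ≠ 0 := by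
    intro h0
    apply hover
    unfold innerChar
    rw [h0, mul_zero]
  have hg2 : ¬ ∀ x : G, (∃ h : x ∈ N, φ ⟨x, h⟩ = φ 1) ↔
      (∃ h : g * x * g⁻¹ ∈ N, φ ⟨g * x * g⁻¹, h⟩ = φ 1) := by
    intro hall
    exact hg hall
  exact GenStrongMonomialAux.main_aux N hN φ hmul hdeg (inertia N hN φ) hNI ψ V hψchar
    hnorm hconj hover2 g hg2
end
end
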